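/- The multiset of 4 triples {1,2,3}, {1,4,5}, {2,4,5}, {6,7,8} is fair and non-special, yet it does not admit a nice two-coloring. -/
import Mathlib


/-- `f` is a *nice (total) `c`-coloring* of the multiset `T` of tuples: the color
classes `f j` sum to `T`, and for each color `j` and every element `i` appearing in
some tuple of `T` there is a tuple of color `j` not containing `i`. -/
def NiceColoring (c : ℕ) (T : Multiset (Finset ℕ+))
    (f : Fin c → Multiset (Finset ℕ+)) : Prop :=
  (∑ j, f j) = T ∧
  ∀ j : Fin c, ∀ i : ℕ+, (∃ t ∈ T, i ∈ t) → ∃ t ∈ f j, i ∉ t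

/-- `T` is *`c`-fair*: every element appearing in some tuple of `T` is absent from at
least `c` of the tuples (counted with multiplicity). -/
def CFair (c : ℕ) (T : Multiset (Finset ℕ+)) : Prop :=
  ∀ i : ℕ+, (∃ t ∈ T, i ∈ t) →
    c ≤ Multiset.card (T.filter (fun t => i ∉ t))

/-- A multiset `T` of `n` triples is *special*: for some three distinct elements
`a, b, c` it consists of `n - 3` copies of the triple `{a, b, c}` together with three
further triples, one containing `a`, one containing `b` and one containing `c`, whose
other elements are distinct from `a`, `b`, `c`. -/
def Special (T : Multiset (Finset ℕ+)) : Prop :=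
  ∃ a b c : ℕ+, a ≠ b ∧ a ≠ c ∧ b ≠ c ∧
    ∃ t₁ t₂ t₃ : Finset ℕ+,
      T = Multiset.replicate (Multiset.card T - 3) {a, b, c} + {t₁, t₂, t₃} ∧
      a ∈ t₁ ∧ b ∉ t₁ ∧ c ∉ t₁ ∧
      a ∉ t₂ ∧ b ∈ t₂ ∧ c ∉ t₂ ∧
      a ∉ t₃ ∧ b ∉ t₃ ∧ c ∈ t₃

/-- The multiset of 4 triples `{1,2,3}, {1,4,5}, {2,4,5}, {6,7,8}`. -/
def exampleFour : Multiset (Finset ℕ+) :=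
  {{1, 2, 3}, {1, 4, 5}, {2, 4, 5}, {6, 7, 8}}

lemma mem_exampleFour {t : Finset ℕ+} (h : t ∈ exampleFour) :
    t = {1,2,3} ∨ t = {1,4,5} ∨ t = {2,4,5} ∨ t = {6,7,8} := by
  simpa [exampleFour] using h

lemma key678 : ∀ s ∈ exampleFour, ∀ x ∈ s, (x = 6 ∨ x = 7 ∨ x = 8) →
    s = ({6,7,8} : Finset ℕ+) := by decide

lemma keyNoNice (g h : Multiset (Finset ℕ+)) (hsum : g + h = exampleFour)
    (hg1 : ∃ t ∈ g, (1:ℕ+) ∉ t) (hg2 : ∃ t ∈ g, (2:ℕ+) ∉ t)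
    (hg4 : ∃ t ∈ g, (4:ℕ+) ∉ t) (hh6 : ∃ t ∈ h, (6:ℕ+) ∉ t)
    (h678 : ({6,7,8} : Finset ℕ+) ∉ g) : False := by
  have hgle : g ≤ exampleFour := hsum ▸ Multiset.le_add_right g h
  have hhle : h ≤ exampleFour := hsum ▸ Multiset.le_add_left h g
  -- {2,4,5} ∈ g
  obtain ⟨t, htg, ht1⟩ := hg1
  have h245 : ({2,4,5} : Finset ℕ+) ∈ g := by
    rcases mem_exampleFour (Multiset.mem_of_le hgle htg) with rfl | rfl | rfl | rfl
    · exact absurd (by decide) ht1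
    · exact absurd (by decide) ht1
    · exact htg
    · exact absurd htg h678
  obtain ⟨t, htg, ht2⟩ := hg2
  have h145 : ({1,4,5} : Finset ℕ+) ∈ g := by
    rcases mem_exampleFour (Multiset.mem_of_le hgle htg) with rfl | rfl | rfl | rfl
    · exact absurd (by decide) ht2
    · exact htg
    · exact absurd (by decide) ht2
    · exact absurd htg h678
  obtain ⟨t, htg, ht4⟩ := hg4
  have h123 : ({1,2,3} : Finset ℕ+) ∈ g := by
    rcases mem_exampleFour (Multiset.mem_of_le hgle htg) with rfl | rfl | rfl | rfl
    · exact htg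
    · exact absurd (by decide) ht4
    · exact absurd (by decide) ht4
    · exact absurd htg h678
  -- hence none of these are in h
  have notin : ∀ s : Finset ℕ+, s ∈ g → Multiset.count s exampleFour = 1 → s ∉ h := by
    intro s hsg hc hsh
    have := Multiset.count_add s g h
    rw [hsum, hc] at this
    have h1 : 1 ≤ Multiset.count s g := Multiset.one_le_count_iff_mem.mpr hsg
    have h2 : 1 ≤ Multiset.count s h := Multiset.one_le_count_iff_mem.mpr hsh
    omega
  obtain ⟨t, hth, ht6⟩ := hh6
  rcases mem_exampleFour (Multiset.mem_of_le hhle hth) with rfl | rfl | rfl | rfl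
  · exact notin _ h123 (by decide) hth
  · exact notin _ h145 (by decide) hth
  · exact notin _ h245 (by decide) hth
  · exact ht6 (by decide)

/-- The multiset of 4 triples `{1,2,3}, {1,4,5}, {2,4,5}, {6,7,8}` is fair and
non-special, yet it does not admit a nice two-coloring. -/
theorem exampleFour_fair_nonspecial_no_nice_two_coloring :
    CFair 2 exampleFour ∧ ¬ Special exampleFour ∧
      ¬ ∃ f : Fin 2 → Multiset (Finset ℕ+), NiceColoring 2 exampleFour f := by
  refine ⟨?_, ?_, ?_⟩
  · -- CFair
    rintro i ⟨t, ht, hit⟩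
    have hi : i = 1 ∨ i = 2 ∨ i = 3 ∨ i = 4 ∨ i = 5 ∨ i = 6 ∨ i = 7 ∨ i = 8 := by
      rcases mem_exampleFour ht with rfl | rfl | rfl | rfl <;> simp_all <;> tauto
    rcases hi with rfl | rfl | rfl | rfl | rfl | rfl | rfl | rfl <;> decide
  · -- not special
    rintro ⟨a, b, c, hab, hac, hbc, t₁, t₂, t₃, hT, ha1, hb1, hc1, ha2, hb2, hc2, ha3, hb3, hc3⟩
    have hcard : Multiset.card exampleFour = 4 := by decide
    rw [hcard] at hT
    have habc : ({a,b,c} : Finset ℕ+) ∈ exampleFour := by rw [hT]; simp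
    have ht1 : t₁ ∈ exampleFour := by rw [hT]; simp
    have ht2 : t₂ ∈ exampleFour := by rw [hT]; simp
    have ht3 : t₃ ∈ exampleFour := by rw [hT]; simp
    have h678 : ({6,7,8} : Finset ℕ+) ∈ exampleFour := by simp [exampleFour]
    rw [hT] at h678
    have hmem : ({6,7,8} : Finset ℕ+) = {a,b,c} ∨ ({6,7,8} : Finset ℕ+) = t₁ ∨
        ({6,7,8} : Finset ℕ+) = t₂ ∨ ({6,7,8} : Finset ℕ+) = t₃ := by
      simp at h678; tauto
    have haabc : a ∈ ({a,b,c} : Finset ℕ+) := by simp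
    have hbabc : b ∈ ({a,b,c} : Finset ℕ+) := by simp
    have hcabc : c ∈ ({a,b,c} : Finset ℕ+) := by simp
    rcases hmem with e | e | e | e
    · have ha678 : a = 6 ∨ a = 7 ∨ a = 8 := by
        have : a ∈ ({6,7,8} : Finset ℕ+) := e ▸ haabc
        simpa using this
      have := key678 t₁ ht1 a ha1 ha678
      rw [this, e] at hb1
      exact hb1 hbabc
    · have ha678 : a = 6 ∨ a = 7 ∨ a = 8 := by
        have : a ∈ ({6,7,8} : Finset ℕ+) := e ▸ ha1
        simpa using this
      have := key678 _ habc a haabc ha678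
      rw [← e] at hb1
      rw [this] at hbabc
      exact hb1 hbabc
    · have hb678 : b = 6 ∨ b = 7 ∨ b = 8 := by
        have : b ∈ ({6,7,8} : Finset ℕ+) := e ▸ hb2
        simpa using this
      have := key678 _ habc b hbabc hb678
      rw [← e] at ha2
      rw [this] at haabc
      exact ha2 haabc
    · have hc678 : c = 6 ∨ c = 7 ∨ c = 8 := by
        have : c ∈ ({6,7,8} : Finset ℕ+) := e ▸ hc3
        simpa using this
      have := key678 _ habc c hcabc hc678
      rw [← e] at ha3
      rw [this] at haabc
      exact ha3 haabc
  · -- no nice coloring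
    rintro ⟨f, hsum, hnice⟩
    rw [Fin.sum_univ_two] at hsum
    have e1 : ∃ t ∈ exampleFour, (1:ℕ+) ∈ t := ⟨{1,2,3}, by simp [exampleFour], by decide⟩
    have e2 : ∃ t ∈ exampleFour, (2:ℕ+) ∈ t := ⟨{1,2,3}, by simp [exampleFour], by decide⟩
    have e4 : ∃ t ∈ exampleFour, (4:ℕ+) ∈ t := ⟨{1,4,5}, by simp [exampleFour], by decide⟩
    have e6 : ∃ t ∈ exampleFour, (6:ℕ+) ∈ t := ⟨{6,7,8}, by simp [exampleFour], by decide⟩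
    have hc : Multiset.count ({6,7,8} : Finset ℕ+) (f 0) +
        Multiset.count ({6,7,8} : Finset ℕ+) (f 1) = 1 := by
      rw [← Multiset.count_add, hsum]; decide
    have h0 : Multiset.count ({6,7,8} : Finset ℕ+) (f 0) = 0 ∨
        Multiset.count ({6,7,8} : Finset ℕ+) (f 1) = 0 := by omega
    rcases h0 with h0 | h0
    · exact keyNoNice (f 0) (f 1) hsum
        (hnice 0 1 e1) (hnice 0 2 e2) (hnice 0 4 e4) (hnice 1 6 e6)
        (Multiset.count_eq_zero.mp h0)
    · exact keyNoNice (f 1) (f 0) (by rw [add_comm]; exact hsum)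
        (hnice 1 1 e1) (hnice 1 2 e2) (hnice 1 4 e4) (hnice 0 6 e6)
        (Multiset.count_eq_zero.mp h0)
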